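/- Under the level-one action of the affine Hecke algebra H_m on Q(q,t)[X_1^{±1},...,X_m^{±1}], for any subset I ⊆ {1,...,m} one has (∏_{i∈I} Y_i) • 1 = t^{|I|(|I|-1)/2} · ∏_{i∈I} X_i. Consequently, the map F(Y) ↦ F(Y)•1 sends the elementary symmetric polynomial e_r(Y_1,...,Y_m) to t^{r(r-1)/2}·e_r(X_1,...,X_m). -/

import Mathlib

set_option maxHeartbeats 1000000
set_option synthInstance.maxHeartbeats 400000

open MvPolynomial

/-- The field `ℚ(q,t)`, realized as the fraction field of `ℚ[q,t]`. -/
abbrev K2 := FractionRing (MvPolynomial (Fin 2) ℚ)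

/-- The parameter `q ∈ ℚ(q,t)`. -/
noncomputable def qq : K2 := algebraMap (MvPolynomial (Fin 2) ℚ) K2 (X 0)

/-- The parameter `t ∈ ℚ(q,t)`. -/
noncomputable def tt : K2 := algebraMap (MvPolynomial (Fin 2) ℚ) K2 (X 1)

/-- The polynomial ring `ℚ(q,t)[X₁,…,X_m]`. -/
abbrev Sqt (m : ℕ) := MvPolynomial (Fin m) K2

/-- The field `ℚ(q,t)(X₁,…,X_m)` in which the Laurent polynomial ring
`ℚ(q,t)[X₁^{±1},…,X_m^{±1}]` naturally embeds. -/
abbrev Lqt (m : ℕ) := FractionRing (Sqt m)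

noncomputable def emb (m : ℕ) : Sqt m →+* Lqt m := algebraMap (Sqt m) (Lqt m)

noncomputable def qL (m : ℕ) : Lqt m := emb m (C qq)

noncomputable def tL (m : ℕ) : Lqt m := emb m (C tt)

noncomputable def Xv (m : ℕ) (a : Fin m) : Lqt m := emb m (X a)

/-- The `ℤ`-indexed variables `X_j`, subject to the level-one convention
`X_{i+km} = q^{-k} X_i`; for `1 ≤ j ≤ m` this is the variable `X_j`. -/
noncomputable def Xz (m : ℕ) (hm : 0 < m) (j : ℤ) : Lqt m :=
  qL m ^ (-((j - 1) / (m : ℤ))) *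
    Xv m ⟨((j - 1) % (m : ℤ)).toNat, by
      have h0 : (0 : ℤ) < (m : ℤ) := by exact_mod_cast hm
      have h1 : 0 ≤ (j - 1) % (m : ℤ) := Int.emod_nonneg _ (ne_of_gt h0)
      have h2 : (j - 1) % (m : ℤ) < (m : ℤ) := Int.emod_lt_of_pos _ h0
      omega⟩

/-- The elementary symmetric polynomial `e_r(X_a, …, X_b)` (equal to `0` for
`r < 0`, and to `δ_{r,0}` when the interval `[a,b]` is empty). -/
noncomputable def esym (m : ℕ) (hm : 0 < m) (a b r : ℤ) : Lqt m :=
  if r < 0 then 0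
  else ∑ I ∈ (Finset.Icc a b).powersetCard r.toNat, ∏ j ∈ I, Xz m hm j

/-- The `t`-integer `[n]_t = 1 + t + ⋯ + t^{n-1}`. -/
noncomputable def tint (m : ℕ) (n : ℕ) : Lqt m := ∑ j ∈ Finset.range n, tL m ^ j

/-- The `t`-factorial `[n]_t!`. -/
noncomputable def tfact (m : ℕ) (n : ℕ) : Lqt m :=
  ∏ j ∈ Finset.range n, tint m (j + 1)

section Basic

theorem emb_inj (m : ℕ) : Function.Injective (emb m) :=
  IsFractionRing.injective (Sqt m) (Lqt m)

theorem Xv_ne_zero (m : ℕ) (a : Fin m) : Xv m a ≠ 0 := by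
  intro h
  have h2 : emb m (X a) = emb m 0 := by simpa [Xv] using h
  exact MvPolynomial.X_ne_zero (R := K2) a (emb_inj m h2)

theorem Xv_ne (m : ℕ) (a b : Fin m) (hab : a ≠ b) : Xv m a ≠ Xv m b := by
  intro h
  exact hab (MvPolynomial.X_injective (emb_inj m h))

theorem tt_ne_zero : (tt : K2) ≠ 0 := by
  intro h
  have h2 : algebraMap (MvPolynomial (Fin 2) ℚ) K2 (X 1) =
      algebraMap (MvPolynomial (Fin 2) ℚ) K2 0 := by simpa [tt] using h
  exact MvPolynomial.X_ne_zero (R := ℚ) 1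
    (IsFractionRing.injective (MvPolynomial (Fin 2) ℚ) K2 h2)

theorem tL_ne_zero (m : ℕ) : tL m ≠ 0 := by
  intro h
  have h2 : emb m (C tt) = emb m 0 := by simpa [tL] using h
  have h3 : (C tt : Sqt m) = 0 := emb_inj m h2
  exact tt_ne_zero (by simpa using h3)

theorem Xz_nat (m : ℕ) (hm : 0 < m) (j : ℕ) (hj1 : 1 ≤ j) (hj2 : j ≤ m) :
    Xz m hm (j : ℤ) = Xv m ⟨j - 1, by omega⟩ := by
  have h0 : (0 : ℤ) ≤ (j : ℤ) - 1 := by omega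
  have h1 : (j : ℤ) - 1 < (m : ℤ) := by omega
  rw [Xz]
  have e1 : -(((j : ℤ) - 1) / (m : ℤ)) = 0 := by
    rw [Int.ediv_eq_zero_of_lt h0 h1]; rfl
  rw [e1, zpow_zero, one_mul]
  congr 1
  apply Fin.ext
  show (((j : ℤ) - 1) % (m : ℤ)).toNat = j - 1
  rw [Int.emod_eq_of_lt h0 h1]
  omega

theorem Xz_nat_ne_zero (m : ℕ) (hm : 0 < m) (j : ℕ) (hj1 : 1 ≤ j) (hj2 : j ≤ m) :
    Xz m hm (j : ℤ) ≠ 0 := by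
  rw [Xz_nat m hm j hj1 hj2]
  exact Xv_ne_zero m _

theorem Xz_nat_ne (m : ℕ) (hm : 0 < m) (j k : ℕ) (hj1 : 1 ≤ j) (hj2 : j ≤ m)
    (hk1 : 1 ≤ k) (hk2 : k ≤ m) (hjk : j ≠ k) :
    Xz m hm (j : ℤ) ≠ Xz m hm (k : ℤ) := by
  rw [Xz_nat m hm j hj1 hj2, Xz_nat m hm k hk1 hk2]
  exact Xv_ne m _ _ (by simp [Fin.ext_iff]; omega)

theorem cast_succ' (j : ℕ) : ((j : ℤ) + 1) = ((j + 1 : ℕ) : ℤ) := by push_cast; ring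

end Basic


theorem hdne {K : Type*} [Field K] (u v : K) (hv : v ≠ 0) (huv : u ≠ v) :
    1 - u * v⁻¹ ≠ 0 := by
  intro h
  apply huv
  field_simp at h
  rw [mul_zero] at h
  exact (sub_eq_zero.mp h).symm

theorem subA {K : Type*} [Field K] (σ : K ≃+* K) (t u v G R : K)
    (ht : t ≠ 0) (hv : v ≠ 0) (huv : u ≠ v) (hG : σ G = G)
    (hR : R = σ G + (1 - t⁻¹) * (u * v⁻¹ * G - σ G) / (1 - u * v⁻¹)) :
    R = t⁻¹ * G := by
  have hd := hdne u v hv huv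
  have hvu : v - u ≠ 0 := sub_ne_zero.mpr (Ne.symm huv)
  rw [hR, hG]
  field_simp [hvu]
  ring

theorem subB {K : Type*} [Field K] (σ : K ≃+* K) (t u v H R : K)
    (hv : v ≠ 0) (hH : σ H = H) (hσv : σ v = u)
    (hR : R = σ (v * H) + (1 - t⁻¹) * (u * v⁻¹ * (v * H) - σ (v * H)) / (1 - u * v⁻¹)) :
    R = u * H := by
  rw [hR, map_mul, hH, hσv]
  rw [show u * v⁻¹ * (v * H) - u * H = 0 by field_simp; ring]
  simp

theorem subC {K : Type*} [Field K] (σ : K ≃+* K) (t u v G R : K)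
    (hG : σ G = G)
    (hR : R = t * σ G + (t - 1) * (G - σ G) / (1 - u * v⁻¹)) :
    R = t * G := by
  rw [hR, hG]
  simp

theorem subD {K : Type*} [Field K] (σ : K ≃+* K) (t u v H R : K)
    (hv : v ≠ 0) (huv : u ≠ v) (hH : σ H = H) (hσu : σ u = v)
    (hR : R = t * σ (u * H) + (t - 1) * (u * H - σ (u * H)) / (1 - u * v⁻¹)) :
    R = v * H := by
  have hd := hdne u v hv huv
  have hvu : v - u ≠ 0 := sub_ne_zero.mpr (Ne.symm huv)
  rw [hR, map_mul, hH, hσu]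
  field_simp [hvu]
  ring


/-- under the level-one action of the affine Hecke algebra,
`(∏_{i ∈ I} Y_i) • 1 = t^{|I|(|I|-1)/2} ∏_{i ∈ I} X_i` for every subset
`I ⊆ {1,…,m}`, where `Y_i = t^{m-i} T_{i-1}⋯T_1 Π T_{m-1}⁻¹⋯T_i⁻¹`;
consequently `e_r(Y_1,…,Y_m) • 1 = t^{r(r-1)/2} e_r(X_1,…,X_m)`. -/
theorem stmt_14 (m : ℕ) (hm : 0 < m)
    (s : ℕ → (Lqt m ≃+* Lqt m))
    (hs : ∀ (a b : Fin m), (b : ℕ) = (a : ℕ) + 1 →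
      ∀ p : Sqt m, s ((a : ℕ) + 1) (emb m p) = emb m (rename (Equiv.swap a b) p))
    (Φ : Lqt m →+* Lqt m)
    (hΦ : ∀ p : Sqt m, Φ (emb m p) = emb m (aeval
      (fun a : Fin m => if h : (a : ℕ) + 1 < m then (X ⟨(a : ℕ) + 1, h⟩ : Sqt m)
        else C qq⁻¹ * X ⟨0, hm⟩) p))
    (Tinv : ℕ → Lqt m → Lqt m)
    (hTinv : ∀ (i : ℕ) (F : Lqt m), Tinv i F = s i F + (1 - (tL m)⁻¹) *
      (Xz m hm i * (Xz m hm (i + 1))⁻¹ * F - s i F) /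
        (1 - Xz m hm i * (Xz m hm (i + 1))⁻¹))
    (Pio : Lqt m → Lqt m) (hPio : ∀ F, Pio F = Xz m hm 1 * Φ F)
    (Ch : ℕ → Lqt m → Lqt m) (hCh0 : ∀ F, Ch 0 F = F)
    (hChS : ∀ (j : ℕ) (F : Lqt m), Ch (j + 1) F = Tinv (j + 1) (Ch j F))
    (Sh : ℤ → Lqt m → Lqt m)
    (hShneg : ∀ a : ℤ, a < 0 → ∀ F, Sh a F = 0)
    (hSh : ∀ (a : ℕ) (F : Lqt m), Sh a F = ∑ j ∈ Finset.range (a + 1), Ch j (Pio F))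
    (T : ℕ → Lqt m → Lqt m)
    (hT : ∀ (i : ℕ) (F : Lqt m), T i F = tL m * s i F + (tL m - 1) *
      (F - s i F) / (1 - Xz m hm i * (Xz m hm (i + 1))⁻¹))
    (TC : ℕ → Lqt m → Lqt m) (hTC0 : ∀ F, TC 0 F = F)
    (hTCS : ∀ (j : ℕ) (F : Lqt m), TC (j + 1) F = T (j + 1) (TC j F))
    (D : ℕ → Lqt m → Lqt m) (hDm : ∀ F, D m F = F)
    (hD : ∀ i : ℕ, 1 ≤ i → i < m → ∀ F, D i F = D (i + 1) (Tinv i F))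
    (Y : ℕ → Lqt m → Lqt m)
    (hY : ∀ i : ℕ, 1 ≤ i → i ≤ m → ∀ F,
      Y i F = tL m ^ (m - i) * TC (i - 1) (Pio (D i F)))
    :
    (∀ I : Finset ℕ, I ⊆ Finset.Icc 1 m →
      (I.sort (· ≤ ·)).foldr (fun i G => Y i G) 1 =
        tL m ^ (I.card * (I.card - 1) / 2) * ∏ i ∈ I, Xz m hm i) ∧
    (∀ r : ℕ,
      (∑ I ∈ (Finset.Icc 1 m).powersetCard r,
        (I.sort (· ≤ ·)).foldr (fun i G => Y i G) 1) =
      tL m ^ (r * (r - 1) / 2) * esym m hm 1 m r) := by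
  classical
  -- action of s i on embedded polynomials
  have hsemb : ∀ i : ℕ, ∀ hi : 1 ≤ i ∧ i < m, ∀ p : Sqt m,
      s i (emb m p) = emb m (rename (Equiv.swap ⟨i - 1, by omega⟩ ⟨i, by omega⟩) p) := by
    intro i hi p
    have h := hs ⟨i - 1, by omega⟩ ⟨i, by omega⟩ (by show i = i - 1 + 1; omega) p
    have h2 : ((⟨i - 1, by omega⟩ : Fin m) : ℕ) = i - 1 := rfl
    rw [h2, show i - 1 + 1 = i by omega] at h
    exact h
  have hst : ∀ i : ℕ, ∀ hi : 1 ≤ i ∧ i < m, s i (tL m) = tL m := by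
    intro i hi
    have h := hsemb i hi (C tt)
    rwa [rename_C] at h
  have hsti : ∀ i : ℕ, ∀ hi : 1 ≤ i ∧ i < m, s i ((tL m)⁻¹) = (tL m)⁻¹ := by
    intro i hi
    rw [map_inv₀, hst i hi]
  have hsXv : ∀ i : ℕ, ∀ hi : 1 ≤ i ∧ i < m, ∀ a : Fin m,
      s i (Xv m a) = Xv m (Equiv.swap ⟨i - 1, by omega⟩ ⟨i, by omega⟩ a) := by
    intro i hi a
    have h := hsemb i hi (X a)
    rwa [rename_X] at h
  -- action of s i on the Xz variables
  have hsXz1 : ∀ i : ℕ, ∀ hi : 1 ≤ i ∧ i < m,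
      s i (Xz m hm (i : ℤ)) = Xz m hm ((i + 1 : ℕ) : ℤ) := by
    intro i hi
    rw [Xz_nat m hm i hi.1 (by omega), Xz_nat m hm (i + 1) (by omega) (by omega),
      hsXv i hi]
    congr 1
    simp only [Equiv.swap_apply_def, Fin.ext_iff, Fin.val_mk]
    split_ifs <;> simp only [Fin.val_mk] <;> omega
  have hsXz2 : ∀ i : ℕ, ∀ hi : 1 ≤ i ∧ i < m,
      s i (Xz m hm ((i + 1 : ℕ) : ℤ)) = Xz m hm (i : ℤ) := by
    intro i hi
    rw [Xz_nat m hm i hi.1 (by omega), Xz_nat m hm (i + 1) (by omega) (by omega),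
      hsXv i hi]
    congr 1
    simp only [Equiv.swap_apply_def, Fin.ext_iff, Fin.val_mk]
    split_ifs <;> simp only [Fin.val_mk] <;> omega
  have hsXzo : ∀ i : ℕ, ∀ hi : 1 ≤ i ∧ i < m, ∀ j : ℕ, ∀ hj : 1 ≤ j ∧ j ≤ m,
      j ≠ i → j ≠ i + 1 → s i (Xz m hm (j : ℤ)) = Xz m hm (j : ℤ) := by
    intro i hi j hj hj1 hj2
    rw [Xz_nat m hm j hj.1 hj.2, hsXv i hi]
    congr 1
    apply Equiv.swap_apply_of_ne_of_ne
    · simp only [ne_eq, Fin.mk.injEq]; omega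
    · simp only [ne_eq, Fin.mk.injEq]; omega
  have hsProd : ∀ i : ℕ, ∀ hi : 1 ≤ i ∧ i < m, ∀ J : Finset ℕ,
      J ⊆ Finset.Icc 1 m → i ∉ J → i + 1 ∉ J →
      s i (∏ j ∈ J, Xz m hm (j : ℤ)) = ∏ j ∈ J, Xz m hm (j : ℤ) := by
    intro i hi J hJ hiJ hi1J
    rw [map_prod]
    apply Finset.prod_congr rfl
    intro j hj
    have hjm := Finset.mem_Icc.mp (hJ hj)
    exact hsXzo i hi j ⟨hjm.1, hjm.2⟩ (fun h => hiJ (h ▸ hj)) (fun h => hi1J (h ▸ hj))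
  -- action of Φ
  have hΦt : Φ (tL m) = tL m := by
    have h := hΦ (C tt)
    rwa [show (aeval fun a : Fin m => if h : (a : ℕ) + 1 < m then (X ⟨(a : ℕ) + 1, h⟩ : Sqt m)
        else C qq⁻¹ * X ⟨0, hm⟩) (C tt) = (C tt : Sqt m) from by
      rw [aeval_C]; rfl] at h
  have hΦX : ∀ j : ℕ, ∀ hj : 1 ≤ j ∧ j < m,
      Φ (Xz m hm (j : ℤ)) = Xz m hm ((j + 1 : ℕ) : ℤ) := by
    intro j hj
    rw [Xz_nat m hm j hj.1 (by omega), Xz_nat m hm (j + 1) (by omega) (by omega)]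
    have h := hΦ (X ⟨j - 1, by omega⟩)
    rw [aeval_X] at h
    rw [show Xv m ⟨j - 1, by omega⟩ = emb m (X ⟨j - 1, by omega⟩) from rfl, h]
    rw [dif_pos (show (((⟨j - 1, by omega⟩ : Fin m) : ℕ) + 1) < m from by
      show j - 1 + 1 < m; omega)]
    show emb m (X _) = Xv m _
    rw [show Xv m ⟨j + 1 - 1, by omega⟩ = emb m (X ⟨j + 1 - 1, by omega⟩) from rfl]
    exact congrArg (emb m) (congrArg X (Fin.ext (show j - 1 + 1 = j + 1 - 1 by omega)))
  -- cast helper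
  have hcast : ∀ j : ℕ, Xz m hm ((j : ℤ) + 1) = Xz m hm ((j + 1 : ℕ) : ℤ) := by
    intro j; congr 1 <;> push_cast <;> ring
  have hvne : ∀ i : ℕ, ∀ hi : 1 ≤ i ∧ i < m, Xz m hm ((i : ℤ) + 1) ≠ 0 := by
    intro i hi; rw [hcast i]; exact Xz_nat_ne_zero m hm (i + 1) (by omega) (by omega)
  have huvne : ∀ i : ℕ, ∀ hi : 1 ≤ i ∧ i < m,
      Xz m hm (i : ℤ) ≠ Xz m hm ((i : ℤ) + 1) := by
    intro i hi; rw [hcast i]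
    exact Xz_nat_ne m hm i (i + 1) hi.1 (by omega) (by omega) (by omega) (by omega)
  have hsXz2' : ∀ i : ℕ, ∀ hi : 1 ≤ i ∧ i < m,
      s i (Xz m hm ((i : ℤ) + 1)) = Xz m hm (i : ℤ) := by
    intro i hi; rw [hcast i]; exact hsXz2 i hi
  -- the key computation for D
  have Dlem : ∀ k : ℕ, ∀ i : ℕ, ∀ hik : i + k = m, ∀ hi : 1 ≤ i,
      ∀ c : Lqt m, (∀ l : ℕ, ∀ hl : 1 ≤ l ∧ l < m, s l c = c) →
      ∀ A J : Finset ℕ, A ⊆ Finset.Icc 1 (i - 1) → J ⊆ Finset.Icc (i + 1) m →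
      D i (c * ((∏ j ∈ A, Xz m hm (j : ℤ)) * ∏ j ∈ J, Xz m hm (j : ℤ))) =
        (c * ((tL m)⁻¹) ^ (k - J.card)) *
          ((∏ j ∈ A, Xz m hm (j : ℤ)) * ∏ j ∈ J, Xz m hm ((j - 1 : ℕ) : ℤ)) := by
    intro k
    induction k with
    | zero =>
      intro i hik hi c hc A J hA hJ
      have him : i = m := by omega
      subst him
      have hJe : J = ∅ := by
        rw [Finset.Icc_eq_empty (by omega)] at hJ
        exact Finset.subset_empty.mp hJ
      subst hJe
      rw [hDm]
      simp
    | succ k ih =>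
      intro i hik hi c hc A J hA hJ
      have him : i < m := by omega
      have hiA : i ∉ A := fun h => by have := Finset.mem_Icc.mp (hA h); omega
      have hi1A : i + 1 ∉ A := fun h => by have := Finset.mem_Icc.mp (hA h); omega
      have hiJ : i ∉ J := fun h => by have := Finset.mem_Icc.mp (hJ h); omega
      have hAm : A ⊆ Finset.Icc 1 m := hA.trans (Finset.Icc_subset_Icc_right (by omega))
      have hJm : J ⊆ Finset.Icc 1 m := hJ.trans (Finset.Icc_subset_Icc_left (by omega))
      have hsA : s i (∏ j ∈ A, Xz m hm (j : ℤ)) = ∏ j ∈ A, Xz m hm (j : ℤ) :=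
        hsProd i ⟨hi, him⟩ A hAm hiA hi1A
      rw [hD i hi him]
      by_cases hmem : i + 1 ∈ J
      · -- the variable X_{i+1} moves down to X_i
        set J' := J.erase (i + 1) with hJ'def
        have hJ'sub : J' ⊆ Finset.Icc (i + 2) m := by
          intro j hj
          have h1 := Finset.mem_of_mem_erase hj
          have h2 := Finset.ne_of_mem_erase hj
          have := Finset.mem_Icc.mp (hJ h1)
          rw [Finset.mem_Icc]; omega
        have hiJ' : i ∉ J' := fun h => hiJ (Finset.mem_of_mem_erase h)
        have hi1J' : i + 1 ∉ J' := Finset.notMem_erase _ _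
        have hcards : J.card = J'.card + 1 := by
          rw [hJ'def, Finset.card_erase_of_mem hmem]
          have : 1 ≤ J.card := Finset.card_pos.mpr ⟨i + 1, hmem⟩
          omega
        have hJ'k : J'.card ≤ k := by
          have := Finset.card_le_card hJ'sub
          rw [Nat.card_Icc] at this
          omega
        have hprodJ : ∏ j ∈ J, Xz m hm (j : ℤ) =
            Xz m hm ((i + 1 : ℕ) : ℤ) * ∏ j ∈ J', Xz m hm (j : ℤ) :=
          (Finset.mul_prod_erase J _ hmem).symm
        have hsH : s i (c * ((∏ j ∈ A, Xz m hm (j : ℤ)) * ∏ j ∈ J', Xz m hm (j : ℤ)))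
            = c * ((∏ j ∈ A, Xz m hm (j : ℤ)) * ∏ j ∈ J', Xz m hm (j : ℤ)) := by
          rw [map_mul, map_mul, hc i ⟨hi, him⟩, hsA,
            hsProd i ⟨hi, him⟩ J' (hJ'sub.trans (Finset.Icc_subset_Icc_left (by omega)))
              hiJ' hi1J']
        have hTstep : Tinv i (c * ((∏ j ∈ A, Xz m hm (j : ℤ)) * ∏ j ∈ J, Xz m hm (j : ℤ)))
            = Xz m hm (i : ℤ) *
              (c * ((∏ j ∈ A, Xz m hm (j : ℤ)) * ∏ j ∈ J', Xz m hm (j : ℤ))) := by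
          have harg : c * ((∏ j ∈ A, Xz m hm (j : ℤ)) * ∏ j ∈ J, Xz m hm (j : ℤ))
              = Xz m hm ((i : ℤ) + 1) *
                (c * ((∏ j ∈ A, Xz m hm (j : ℤ)) * ∏ j ∈ J', Xz m hm (j : ℤ))) := by
            rw [hprodJ, hcast i]; ring
          refine subB (s i) (tL m) (Xz m hm (i : ℤ)) (Xz m hm ((i : ℤ) + 1)) _ _
            (hvne i ⟨hi, him⟩) hsH (hsXz2' i ⟨hi, him⟩) ?_
          rw [← harg]
          exact hTinv i _
        rw [hTstep]
        have harg2 : Xz m hm (i : ℤ) *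
              (c * ((∏ j ∈ A, Xz m hm (j : ℤ)) * ∏ j ∈ J', Xz m hm (j : ℤ)))
            = c * ((∏ j ∈ insert i A, Xz m hm (j : ℤ)) * ∏ j ∈ J', Xz m hm (j : ℤ)) := by
          rw [Finset.prod_insert hiA]; ring
        rw [harg2, ih (i + 1) (by omega) (by omega) c hc (insert i A) J'
          (by
            rw [Finset.insert_subset_iff]
            constructor
            · rw [Finset.mem_Icc]; omega
            · exact hA.trans (Finset.Icc_subset_Icc_right (by omega)))
          hJ'sub]
        rw [Finset.prod_insert hiA]
        have hprodJ1 : ∏ j ∈ J, Xz m hm ((j - 1 : ℕ) : ℤ) =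
            Xz m hm ((i + 1 - 1 : ℕ) : ℤ) * ∏ j ∈ J', Xz m hm ((j - 1 : ℕ) : ℤ) :=
          (Finset.mul_prod_erase J _ hmem).symm
        rw [hprodJ1, show i + 1 - 1 = i by omega, show k - J'.card = k + 1 - J.card by omega]
        ring
      · -- everything is symmetric, pick up a factor t⁻¹
        have hJsub : J ⊆ Finset.Icc (i + 2) m := by
          intro j hj
          have := Finset.mem_Icc.mp (hJ hj)
          rw [Finset.mem_Icc]
          rcases Nat.eq_or_lt_of_le this.1 with h | h
          · exact absurd (h ▸ hj) hmem
          · omega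
        have hJk : J.card ≤ k := by
          have := Finset.card_le_card hJsub
          rw [Nat.card_Icc] at this
          omega
        have hi1J : i + 1 ∉ J := hmem
        have hsG : s i (c * ((∏ j ∈ A, Xz m hm (j : ℤ)) * ∏ j ∈ J, Xz m hm (j : ℤ)))
            = c * ((∏ j ∈ A, Xz m hm (j : ℤ)) * ∏ j ∈ J, Xz m hm (j : ℤ)) := by
          rw [map_mul, map_mul, hc i ⟨hi, him⟩, hsA, hsProd i ⟨hi, him⟩ J hJm hiJ hi1J]
        have hTstep : Tinv i (c * ((∏ j ∈ A, Xz m hm (j : ℤ)) * ∏ j ∈ J, Xz m hm (j : ℤ)))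
            = (tL m)⁻¹ * (c * ((∏ j ∈ A, Xz m hm (j : ℤ)) * ∏ j ∈ J, Xz m hm (j : ℤ))) :=
          subA (s i) (tL m) (Xz m hm (i : ℤ)) (Xz m hm ((i : ℤ) + 1)) _ _
            (tL_ne_zero m) (hvne i ⟨hi, him⟩) (huvne i ⟨hi, him⟩) hsG (hTinv i _)
        rw [hTstep]
        have harg : (tL m)⁻¹ * (c * ((∏ j ∈ A, Xz m hm (j : ℤ)) * ∏ j ∈ J, Xz m hm (j : ℤ)))
            = ((tL m)⁻¹ * c) * ((∏ j ∈ A, Xz m hm (j : ℤ)) * ∏ j ∈ J, Xz m hm (j : ℤ)) := by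
          ring
        rw [harg, ih (i + 1) (by omega) (by omega) ((tL m)⁻¹ * c)
          (fun l hl => by rw [map_mul, hsti l hl, hc l hl])
          A J (hA.trans (Finset.Icc_subset_Icc_right (by omega))) hJsub]
        rw [show k + 1 - J.card = (k - J.card) + 1 by omega, pow_succ]
        ring
  -- the key computation for TC
  have TClem : ∀ l : ℕ, ∀ hl : l < m,
      ∀ c : Lqt m, (∀ j : ℕ, ∀ hj : 1 ≤ j ∧ j < m, s j c = c) →
      ∀ J : Finset ℕ, J ⊆ Finset.Icc (l + 2) m →
      TC l (c * (Xz m hm ((1 : ℕ) : ℤ) * ∏ j ∈ J, Xz m hm (j : ℤ))) =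
        c * (Xz m hm ((l + 1 : ℕ) : ℤ) * ∏ j ∈ J, Xz m hm (j : ℤ)) := by
    intro l
    induction l with
    | zero => intro _ c _ J _; rw [hTC0]
    | succ l ih =>
      intro hl c hc J hJ
      have hl' : l + 1 < m := hl
      rw [hTCS, ih (by omega) c hc J (hJ.trans (Finset.Icc_subset_Icc_left (by omega)))]
      have hJm : J ⊆ Finset.Icc 1 m := hJ.trans (Finset.Icc_subset_Icc_left (by omega))
      have hl1J : l + 1 ∉ J := fun h => by have := Finset.mem_Icc.mp (hJ h); omega
      have hl2J : l + 1 + 1 ∉ J := fun h => by have := Finset.mem_Icc.mp (hJ h); omega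
      have hsH : s (l + 1) (c * ∏ j ∈ J, Xz m hm (j : ℤ))
          = c * ∏ j ∈ J, Xz m hm (j : ℤ) := by
        rw [map_mul, hc (l + 1) ⟨by omega, hl'⟩,
          hsProd (l + 1) ⟨by omega, hl'⟩ J hJm hl1J hl2J]
      have hsu : s (l + 1) (Xz m hm ((l + 1 : ℕ) : ℤ)) = Xz m hm (((l + 1 : ℕ) : ℤ) + 1) := by
        rw [hcast (l + 1)]
        exact hsXz1 (l + 1) ⟨by omega, hl'⟩
      have hstep : T (l + 1) (Xz m hm ((l + 1 : ℕ) : ℤ) * (c * ∏ j ∈ J, Xz m hm (j : ℤ)))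
          = Xz m hm (((l + 1 : ℕ) : ℤ) + 1) * (c * ∏ j ∈ J, Xz m hm (j : ℤ)) :=
        subD (s (l + 1)) (tL m) (Xz m hm ((l + 1 : ℕ) : ℤ))
          (Xz m hm (((l + 1 : ℕ) : ℤ) + 1)) _ _
          (hvne (l + 1) ⟨by omega, hl'⟩) (huvne (l + 1) ⟨by omega, hl'⟩) hsH hsu
          (hT (l + 1) _)
      have harg : c * (Xz m hm ((l + 1 : ℕ) : ℤ) * ∏ j ∈ J, Xz m hm (j : ℤ))
          = Xz m hm ((l + 1 : ℕ) : ℤ) * (c * ∏ j ∈ J, Xz m hm (j : ℤ)) := by ring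
      rw [harg, hstep, hcast (l + 1)]
      ring
  -- action of Y on suitable products
  have Ylem : ∀ i : ℕ, ∀ hi : 1 ≤ i ∧ i ≤ m, ∀ c : Lqt m,
      (∀ l : ℕ, ∀ hl : 1 ≤ l ∧ l < m, s l c = c) → Φ c = c →
      ∀ J : Finset ℕ, J ⊆ Finset.Icc (i + 1) m →
      Y i (c * ∏ j ∈ J, Xz m hm (j : ℤ)) =
        (c * tL m ^ J.card) * (Xz m hm (i : ℤ) * ∏ j ∈ J, Xz m hm (j : ℤ)) := by
    intro i hi c hc hcΦ J hJ
    have hJk : J.card ≤ m - i := by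
      have := Finset.card_le_card hJ
      rw [Nat.card_Icc] at this
      omega
    rw [hY i hi.1 hi.2]
    have h1 : c * ∏ j ∈ J, Xz m hm (j : ℤ)
        = c * ((∏ j ∈ (∅ : Finset ℕ), Xz m hm (j : ℤ)) * ∏ j ∈ J, Xz m hm (j : ℤ)) := by
      simp
    rw [h1, Dlem (m - i) i (by omega) hi.1 c hc ∅ J (by simp) hJ]
    rw [Finset.prod_empty, one_mul, hPio]
    rw [map_mul, map_mul, map_pow, map_inv₀, hΦt, hcΦ]
    have hΦprod : Φ (∏ j ∈ J, Xz m hm ((j - 1 : ℕ) : ℤ)) = ∏ j ∈ J, Xz m hm (j : ℤ) := by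
      rw [map_prod]
      apply Finset.prod_congr rfl
      intro j hj
      have hj' := Finset.mem_Icc.mp (hJ hj)
      have h := hΦX (j - 1) ⟨by omega, by omega⟩
      rwa [show j - 1 + 1 = j by omega] at h
    rw [hΦprod]
    have hTCarg : Xz m hm 1 *
          (c * (tL m)⁻¹ ^ (m - i - J.card) * ∏ j ∈ J, Xz m hm (j : ℤ))
        = (c * (tL m)⁻¹ ^ (m - i - J.card)) *
          (Xz m hm ((1 : ℕ) : ℤ) * ∏ j ∈ J, Xz m hm (j : ℤ)) := by
      rw [show ((1 : ℕ) : ℤ) = (1 : ℤ) by norm_num]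
      ring
    rw [hTCarg, TClem (i - 1) (by omega) (c * (tL m)⁻¹ ^ (m - i - J.card))
      (fun l hl => by rw [map_mul, map_pow, hsti l hl, hc l hl]) J
      (by rwa [show i - 1 + 2 = i + 1 by omega])]
    rw [show i - 1 + 1 = i by omega]
    have hpow : tL m ^ (m - i) * ((tL m)⁻¹) ^ (m - i - J.card) = tL m ^ J.card := by
      rw [inv_pow, show m - i = (m - i - J.card) + J.card by omega, pow_add]
      field_simp
      rw [mul_comm]
      rw [Nat.add_sub_cancel]
      exact mul_div_cancel_right₀ _ (pow_ne_zero _ (tL_ne_zero m))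
    calc tL m ^ (m - i) * (c * (tL m)⁻¹ ^ (m - i - J.card) *
            (Xz m hm (i : ℤ) * ∏ j ∈ J, Xz m hm (j : ℤ)))
        = (tL m ^ (m - i) * ((tL m)⁻¹) ^ (m - i - J.card)) * c *
            (Xz m hm (i : ℤ) * ∏ j ∈ J, Xz m hm (j : ℤ)) := by ring
      _ = (c * tL m ^ J.card) * (Xz m hm (i : ℤ) * ∏ j ∈ J, Xz m hm (j : ℤ)) := by
          rw [hpow]; ring
  -- arithmetic helper
  have harith : ∀ k : ℕ, k * (k - 1) / 2 + k = (k + 1) * (k + 1 - 1) / 2 := by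
    intro k
    have h1 : (k + 1) * (k + 1 - 1) = k * (k - 1) + 2 * k := by
      cases k with
      | zero => rfl
      | succ n => simp only [Nat.add_sub_cancel]; ring
    have h2 : 2 ∣ k * (k - 1) := by
      cases k with
      | zero => simp
      | succ n =>
        simp only [Nat.add_sub_cancel]
        rw [Nat.mul_comm]
        exact (Nat.even_mul_succ_self n).two_dvd
    omega
  -- the fold over a sorted list
  have Llem : ∀ L : List ℕ, L.Pairwise (· < ·) → (∀ j ∈ L, j ∈ Finset.Icc 1 m) →
      L.foldr (fun i G => Y i G) 1 =
        tL m ^ (L.length * (L.length - 1) / 2) * ∏ j ∈ L.toFinset, Xz m hm (j : ℤ) := by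
    intro L
    induction L with
    | nil => intro _ _; simp
    | cons i L ih =>
      intro hsort hmem
      have hsort' : L.Pairwise (· < ·) := hsort.of_cons
      have hrel : ∀ j ∈ L, i < j := fun j hj => List.rel_of_pairwise_cons hsort hj
      have hiI := Finset.mem_Icc.mp (hmem i (by simp))
      rw [List.foldr_cons, ih hsort' (fun j hj => hmem j (by simp [hj]))]
      have hiL : i ∉ L.toFinset := by
        rw [List.mem_toFinset]
        intro h
        exact absurd (hrel i h) (lt_irrefl i)
      have hcard : L.toFinset.card = L.length := List.toFinset_card_of_nodup hsort'.nodup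
      have hJ : L.toFinset ⊆ Finset.Icc (i + 1) m := by
        intro j hj
        rw [List.mem_toFinset] at hj
        have h1 := hrel j hj
        have h2 := Finset.mem_Icc.mp (hmem j (by simp [hj]))
        rw [Finset.mem_Icc]
        omega
      rw [Ylem i ⟨hiI.1, hiI.2⟩ (tL m ^ (L.length * (L.length - 1) / 2))
        (fun l hl => by rw [map_pow, hst l hl]) (by rw [map_pow, hΦt]) L.toFinset hJ]
      rw [List.toFinset_cons, Finset.prod_insert hiL, hcard]
      rw [List.length_cons]
      calc tL m ^ (L.length * (L.length - 1) / 2) * tL m ^ L.length *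
              (Xz m hm (i : ℤ) * ∏ j ∈ L.toFinset, Xz m hm (j : ℤ))
          = tL m ^ (L.length * (L.length - 1) / 2 + L.length) *
              (Xz m hm (i : ℤ) * ∏ j ∈ L.toFinset, Xz m hm (j : ℤ)) := by
            rw [pow_add]
        _ = tL m ^ ((L.length + 1) * (L.length + 1 - 1) / 2) *
              (Xz m hm (i : ℤ) * ∏ j ∈ L.toFinset, Xz m hm (j : ℤ)) := by
            rw [harith L.length]
  -- part 1
  have part1 : ∀ I : Finset ℕ, I ⊆ Finset.Icc 1 m →
      (I.sort (· ≤ ·)).foldr (fun i G => Y i G) 1 =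
        tL m ^ (I.card * (I.card - 1) / 2) * ∏ i ∈ I, Xz m hm (i : ℤ) := by
    intro I hI
    have h := Llem (I.sort (· ≤ ·)) (Finset.sortedLT_sort I).pairwise
      (fun j hj => hI ((Finset.mem_sort _).mp hj))
    rwa [Finset.sort_toFinset, Finset.length_sort] at h
  refine ⟨part1, ?_⟩
  intro r
  -- rewrite esym as a sum over subsets of the ℕ-interval
  have hes : esym m hm 1 m (r : ℤ) =
      ∑ I ∈ (Finset.Icc (1 : ℤ) (m : ℤ)).powersetCard r, ∏ j ∈ I, Xz m hm j := by
    rw [esym, if_neg (by omega)]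
    norm_num
  rw [hes]
  have hf : Finset.Icc (1 : ℤ) (m : ℤ) =
      (Finset.Icc 1 m).map ⟨(Nat.cast : ℕ → ℤ), Nat.cast_injective⟩ := by
    ext x
    simp only [Finset.mem_map, Finset.mem_Icc, Function.Embedding.coeFn_mk]
    constructor
    · intro hx
      exact ⟨x.toNat, ⟨by omega, by omega⟩, by omega⟩
    · rintro ⟨n, hn, rfl⟩
      omega
  rw [hf, Finset.powersetCard_map, Finset.sum_map, Finset.mul_sum]
  apply Finset.sum_congr rfl
  intro I hI
  obtain ⟨hIs, hIc⟩ := Finset.mem_powersetCard.mp hI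
  rw [part1 I hIs, hIc]
  simp only [RelEmbedding.coe_toEmbedding, Finset.mapEmbedding_apply, Finset.prod_map]
  rfl
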